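/- Let A be an m×n real matrix (with n ≥ 2) such that S^+(Ax) ≤ S^-(x) for every nonzero vector x ∈ ℝ^n. Then all entries of A are nonzero and have the same sign. -/

import Mathlib

open Matrix Filter

/-- Number of sign changes in a list of reals (consecutive pairs with negative product). -/
noncomputable def signChanges (l : List ℝ) : ℕ :=
  (l.zip l.tail).countP (fun p => decide (p.1 * p.2 < 0))

/-- `S^-(v)`: sign changes of the coordinates of `v` after discarding zero entries. -/
noncomputable def Sm {n : ℕ} (v : Fin n → ℝ) : ℕ :=
  signChanges ((List.ofFn v).filter (fun x => decide (x ≠ 0)))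

/-- `S^+(v)`: maximal number of sign changes over all ±1 completions of the zero
entries of `v`, with the convention `S^+(0) = n`. -/
noncomputable def Sp {n : ℕ} (v : Fin n → ℝ) : ℕ :=
  if v = 0 then n
  else Finset.univ.sup (fun σ : Fin n → Bool =>
    signChanges (List.ofFn (fun i => if v i = 0 then (if σ i then (1:ℝ) else -1) else v i)))

/-- First nonzero entry of a vector (`0` if the vector is zero). -/
noncomputable def firstNz {n : ℕ} (v : Fin n → ℝ) : ℝ :=
  ((List.ofFn v).filter (fun x => decide (x ≠ 0))).headI

/-- `A` is strictly sign regular with sign pattern `ε`: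
every `r × r` minor (`1 ≤ r ≤ min m n`) is nonzero with sign `ε r`. -/
def ssrPattern {m n : ℕ} (A : Matrix (Fin m) (Fin n) ℝ) (ε : ℕ → ℝ) : Prop :=
  ∀ r : ℕ, 1 ≤ r → r ≤ min m n → ∀ (f : Fin r → Fin m) (g : Fin r → Fin n),
    StrictMono f → StrictMono g → 0 < ε r * (A.submatrix f g).det

/-- `A` is sign regular with sign pattern `ε`:
every nonzero `r × r` minor (`1 ≤ r ≤ min m n`) has sign `ε r`. -/
def srPattern {m n : ℕ} (A : Matrix (Fin m) (Fin n) ℝ) (ε : ℕ → ℝ) : Prop :=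
  ∀ r : ℕ, 1 ≤ r → r ≤ min m n → ∀ (f : Fin r → Fin m) (g : Fin r → Fin n),
    StrictMono f → StrictMono g → 0 ≤ ε r * (A.submatrix f g).det

/-- The map `f` picks out consecutive indices. -/
def Contig {r m : ℕ} (f : Fin r → Fin m) : Prop :=
  ∃ a : ℕ, ∀ i : Fin r, (f i : ℕ) = a + (i : ℕ)



lemma signChanges_cons_cons (x y : ℝ) (t : List ℝ) :
    signChanges (x :: y :: t) = (if x * y < 0 then 1 else 0) + signChanges (y :: t) := by
  simp only [signChanges, List.zip_cons_cons, List.tail_cons, List.countP_cons]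
  split <;> simp_all <;> omega

lemma signChanges_eq_zero (l : List ℝ) (h : ∀ a ∈ l, 0 ≤ a) : signChanges l = 0 := by
  rw [signChanges, List.countP_eq_zero]
  intro p hp
  obtain ⟨h1, h2⟩ := List.of_mem_zip hp
  have := h p.1 h1
  have := h p.2 (List.mem_of_mem_tail h2)
  simp only [decide_eq_true_eq, not_lt]
  positivity

lemma one_le_signChanges_aux (b : ℝ) (l : List ℝ) : ∀ x : ℝ, (∀ a ∈ x :: l, a ≠ 0) →
    b ∈ x :: l → x * b < 0 → 1 ≤ signChanges (x :: l) := by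
  induction l with
  | nil =>
    intro x _ hb hxb
    simp only [List.mem_singleton] at hb
    subst hb; nlinarith [mul_self_nonneg b]
  | cons y t ih =>
    intro x h0 hb hxb
    rw [signChanges_cons_cons]
    by_cases hxy : x * y < 0
    · simp [hxy]
    · have hx := h0 x (by simp)
      have hy := h0 y (by simp)
      have hxy' : 0 < x * y := lt_of_le_of_ne (not_lt.mp hxy)
        (by simp [mul_eq_zero, hx, hy, eq_comm])
      have hb' : b ∈ y :: t := by
        rcases List.mem_cons.mp hb with h | h
        · exfalso; subst h; nlinarith [mul_self_nonneg b]
        · exact h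
      have hx2 : 0 < x * x := mul_self_pos.mpr hx
      have : 1 ≤ signChanges (y :: t) := by
        refine ih y (fun a ha => h0 a (List.mem_cons_of_mem _ ha)) hb' ?_
        by_contra h
        push_neg at h
        nlinarith [mul_nonneg hx2.le h, mul_pos hxy' (neg_pos.mpr hxb)]
      omega

lemma one_le_signChanges (l : List ℝ) (h0 : ∀ a ∈ l, a ≠ 0)
    (a b : ℝ) (ha : a ∈ l) (hb : b ∈ l) (hab : a * b < 0) : 1 ≤ signChanges l := by
  cases l with
  | nil => simp at ha
  | cons x t =>
    have hx := h0 x (by simp)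
    by_cases h1 : x * a < 0
    · exact one_le_signChanges_aux a t x h0 ha h1
    · by_cases h2 : x * b < 0
      · exact one_le_signChanges_aux b t x h0 hb h2
      · exfalso
        have hxa := not_lt.mp h1
        have hxb := not_lt.mp h2
        have hx2 : 0 < x * x := mul_self_pos.mpr hx
        nlinarith [mul_nonneg hxa hxb, mul_pos hx2 (neg_pos.mpr hab)]


lemma mem_ofFn' {k : ℕ} (f : Fin k → ℝ) (a : ℝ) : a ∈ List.ofFn f ↔ ∃ i, f i = a := by
  simp [List.mem_ofFn, Set.mem_range]



lemma Sm_eq_zero {n : ℕ} (v : Fin n → ℝ) (h : ∀ i, 0 ≤ v i) : Sm v = 0 := by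
  apply signChanges_eq_zero
  intro a ha
  obtain ⟨i, hi⟩ := (mem_ofFn' _ _).mp (List.mem_of_mem_filter ha)
  exact hi ▸ h i

lemma one_le_Sp {m : ℕ} (hm : 1 ≤ m) (v : Fin m → ℝ) (i : Fin m) (hvi : v i = 0) :
    1 ≤ Sp v := by
  rw [Sp]
  split
  · omega
  · rename_i hv
    obtain ⟨p, hp⟩ := Function.ne_iff.mp hv
    simp only [Pi.zero_apply] at hp
    refine le_trans ?_ (Finset.le_sup (Finset.mem_univ (fun _ : Fin m => decide (v p < 0))))
    set w : Fin m → ℝ := fun k =>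
      if v k = 0 then (if decide (v p < 0) then (1:ℝ) else -1) else v k with hw
    have hwnz : ∀ a ∈ List.ofFn w, a ≠ 0 := by
      intro a ha
      obtain ⟨k, hk⟩ := (mem_ofFn' _ _).mp ha
      subst hk
      simp only [hw]
      split
      · split <;> norm_num
      · assumption
    refine one_le_signChanges _ hwnz (w i) (w p) ((mem_ofFn' _ _).mpr ⟨i, rfl⟩)
      ((mem_ofFn' _ _).mpr ⟨p, rfl⟩) ?_
    have hwp : w p = v p := by simp [hw, hp]
    have hwi : w i = if v p < 0 then (1:ℝ) else -1 := by
      by_cases hvp : v p < 0 <;> simp [hw, hvi, hvp]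
    rw [hwp, hwi]
    rcases (Ne.lt_or_gt hp) with h | h
    · simp [h]
    · rw [if_neg (not_lt.mpr h.le)]; nlinarith

lemma Sp_zero_signs {m : ℕ} (hm : 1 ≤ m) (v : Fin m → ℝ) (h : Sp v = 0) :
    (∀ i, 0 < v i) ∨ (∀ i, v i < 0) := by
  have hv : v ≠ 0 := by
    intro hv0
    rw [Sp, if_pos hv0] at h
    omega
  have hnz : ∀ i, v i ≠ 0 := by
    intro i hi
    have := one_le_Sp hm v i hi
    omega
  have hsc : signChanges (List.ofFn v) = 0 := by
    rw [Sp, if_neg hv] at h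
    have := Finset.sup_le_iff.mp h.le (fun _ => true) (Finset.mem_univ _)
    simpa [fun i => hnz i] using this
  by_contra hcon
  push_neg at hcon
  obtain ⟨⟨i, hi⟩, j, hj⟩ := hcon
  have hi' : v i < 0 := (hnz i).lt_of_le hi
  have hj' : 0 < v j := (hnz j).lt_of_le' hj
  have : 1 ≤ signChanges (List.ofFn v) := by
    refine one_le_signChanges _ ?_ (v i) (v j) ((mem_ofFn' _ _).mpr ⟨i, rfl⟩)
      ((mem_ofFn' _ _).mpr ⟨j, rfl⟩) ?_
    · intro a ha
      obtain ⟨k, hk⟩ := (mem_ofFn' _ _).mp ha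
      exact hk ▸ hnz k
    · nlinarith
  omega

theorem stmt1 {m n : ℕ} (hn : 2 ≤ n) (A : Matrix (Fin m) (Fin n) ℝ)
    (hVD : ∀ x : Fin n → ℝ, x ≠ 0 → Sp (A *ᵥ x) ≤ Sm x) :
    (∀ i j, 0 < A i j) ∨ (∀ i j, A i j < 0) := by
  rcases Nat.eq_zero_or_pos m with hm | hm
  · left; intro i j; exact absurd i.isLt (by omega)
  -- each column has constant sign
  have hcol : ∀ j, (∀ i, 0 < A i j) ∨ (∀ i, A i j < 0) := by
    intro j
    have hx0 : (Pi.single j (1:ℝ) : Fin n → ℝ) ≠ 0 := by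
      intro h
      have := congrFun h j
      simp at this
    have hAx : A *ᵥ Pi.single j (1:ℝ) = fun i => A i j := by
      rw [Matrix.mulVec_single]
      ext i; simp
    have hle := hVD _ hx0
    rw [Sm_eq_zero _ (fun i => by by_cases h : i = j <;> simp [Pi.single_apply, h]),
      Nat.le_zero] at hle
    have := Sp_zero_signs hm _ hle
    rw [hAx] at this
    exact this
  by_cases hpos : ∀ i j, 0 < A i j
  · left; exact hpos
  right
  push_neg at hpos
  obtain ⟨i0, j0, hij0⟩ := hpos
  have hcolneg : ∀ i, A i j0 < 0 := by
    rcases hcol j0 with h | h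
    · exact absurd (h i0) (not_lt.mpr hij0)
    · exact h
  intro i j
  rcases hcol j with h | h
  · -- column j positive, column j0 negative : contradiction
    exfalso
    have hjj0 : j ≠ j0 := by
      intro e
      exact absurd (h i0) (not_lt.mpr (e ▸ hij0))
    set t : ℝ := A i0 j / (-(A i0 j0)) with ht
    have htpos : 0 < t := div_pos (h i0) (by linarith [hcolneg i0])
    set x : Fin n → ℝ := Pi.single j 1 + Pi.single j0 t with hx
    have hxnn : ∀ k, 0 ≤ x k := by
      intro k
      simp only [hx, Pi.add_apply, Pi.single_apply]
      split <;> split <;> norm_num <;> linarith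
    have hxj : x j = 1 := by
      simp [hx, Pi.single_apply, hjj0]
    have hxne : x ≠ 0 := by
      intro h0
      have := congrFun h0 j
      rw [hxj] at this
      simpa using this
    have hle := hVD x hxne
    rw [Sm_eq_zero x hxnn, Nat.le_zero] at hle
    have hAxi : (A *ᵥ x) i0 = 0 := by
      have hne : A i0 j0 ≠ 0 := (hcolneg i0).ne
      simp only [hx, Matrix.mulVec_add, Matrix.mulVec_single, Pi.add_apply, ht]
      simp only [Pi.smul_apply, Matrix.col_apply, op_smul_eq_mul]
      rw [div_neg, mul_neg, mul_div_assoc', mul_div_cancel_left₀ _ hne]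
      ring
    have := one_le_Sp hm _ i0 hAxi
    omega
  · exact h i
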